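/- arXiv:2508.10323 — 2 statements merged into one kernel-verified Lean document; each statement's English description precedes it below -/
import Mathlib

section
/- Let $(X,d)$ be a category enriched over the monoidal poset $\mathbb{W}(\mathbb{L})$. Then for every $n \in \mathbb{N}_{>0}$, defining $d_{(n)}(x,y) = d(x,y)(m_{(n)})$, the pair $(X, d_{(n)})$ is an $\mathbb{L}$-category, i.e. $d_{(n)}(x,x) = 0$ and $d_{(n)}(x,z) \leq d_{(n)}(x,y) + d_{(n)}(y,z)$ for all $x,y,z \in X$. -/
open scoped Classical ENNReal
open Tropical

noncomputable section

/-- The Lawvere quantale `𝕃 = [0,∞]` viewed as a rig: addition is `min`, multiplication is `+`. -/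
abbrev Trop : Type := Tropical ℝ≥0∞

/-- Coefficient of a formal power series in infinitely many variables. -/
def cf {σ : Type} (φ : MvPowerSeries σ ℕ) (d : σ →₀ ℕ) : ℕ := MvPowerSeries.coeff (R := ℕ) d φ

/-- The multiset of nonzero entries of an exponent vector. -/
def parts (d : ℕ →₀ ℕ) : Multiset ℕ := d.support.val.map d

lemma zero_not_mem_parts (d : ℕ →₀ ℕ) : (0 : ℕ) ∉ parts d := by
  intro h
  obtain ⟨a, ha, ha0⟩ := Multiset.mem_map.mp h
  exact Finsupp.mem_support_iff.mp (Finset.mem_val.mp ha) ha0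

/-- Partitions: multisets of positive natural numbers. -/
def Ptn : Type := {s : Multiset ℕ // (0 : ℕ) ∉ s}

/-- The monomial symmetric function `m_λ`, as a symmetric power series of bounded degree
in the variables `x_0, x_1, x_2, …`. -/
def mfun (l : Multiset ℕ) : MvPowerSeries ℕ ℕ := fun d => if parts d = l then 1 else 0

/-- `Λ`, the rig of symmetric functions with coefficients in `ℕ`: the subsemiring of
power series generated by the monomial symmetric functions. -/
def Lam : Subsemiring (MvPowerSeries ℕ ℕ) :=
  Subsemiring.closure (Set.range fun l : Ptn => mfun l.1)

/-- `m_λ` as an element of `Λ`. -/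
def mP (l : Ptn) : Lam := ⟨mfun l.1, Subsemiring.subset_closure (Set.mem_range_self l)⟩

/-- The one-part partition `(n)`. -/
def pnat (n : ℕ) (hn : 0 < n) : Ptn := ⟨{n}, fun h => hn.ne' (Multiset.mem_singleton.mp h).symm⟩

/-- The Witt vectors of the Lawvere quantale: rig homomorphisms `Λ → 𝕃`. -/
abbrev WL := Lam →+* Trop

/-- Row margin of an exponent vector on `ℕ × ℕ`. -/
def rowM (e : (ℕ × ℕ) →₀ ℕ) : ℕ →₀ ℕ := e.mapDomain Prod.fst
/-- Column margin of an exponent vector on `ℕ × ℕ`. -/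
def colM (e : (ℕ × ℕ) →₀ ℕ) : ℕ →₀ ℕ := e.mapDomain Prod.snd

/-- The elementary tensor `a ⊗ b` in `Λ ⊗ Λ`, realized as a power series on variables
`x_i ⊗ x_j` indexed by `ℕ × ℕ`. -/
def tens (a b : MvPowerSeries ℕ ℕ) : MvPowerSeries (ℕ × ℕ) ℕ :=
  fun e => cf a (rowM e) * cf b (colM e)

/-- Comultiplication `Δ^×`: substitute the family `x_i ⊗ x_j` for the variables,
along a bijection `ℕ ≃ ℕ × ℕ`. -/
def Dmul (eqt : ℕ ≃ ℕ × ℕ) (φ : MvPowerSeries ℕ ℕ) : MvPowerSeries (ℕ × ℕ) ℕ :=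
  fun e => cf φ (Finsupp.equivMapDomain eqt.symm e)

/-- Left margin of an exponent vector on `ℕ ⊕ ℕ`. -/
def lM (e : (ℕ ⊕ ℕ) →₀ ℕ) : ℕ →₀ ℕ := Finsupp.comapDomain Sum.inl e Sum.inl_injective.injOn
/-- Right margin of an exponent vector on `ℕ ⊕ ℕ`. -/
def rM (e : (ℕ ⊕ ℕ) →₀ ℕ) : ℕ →₀ ℕ := Finsupp.comapDomain Sum.inr e Sum.inr_injective.injOn

/-- The elementary tensor `a ⊗ b` realized as a power series on `ℕ ⊕ ℕ`. -/
def tensP (a b : MvPowerSeries ℕ ℕ) : MvPowerSeries (ℕ ⊕ ℕ) ℕ :=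
  fun e => cf a (lM e) * cf b (rM e)

/-- Coaddition `Δ^+`: substitute `x_i ⊗ 1` and `1 ⊗ x_i` for the variables,
along a bijection `ℕ ≃ ℕ ⊕ ℕ`. -/
def Dadd (eqp : ℕ ≃ ℕ ⊕ ℕ) (φ : MvPowerSeries ℕ ℕ) : MvPowerSeries (ℕ ⊕ ℕ) ℕ :=
  fun e => cf φ (Finsupp.equivMapDomain eqp.symm e)

/-- The order on `𝕎(𝕃)`: `f ≤ g` iff `g (m_λ) ≤ f (m_λ)` (usual order on `[0,∞]`)
for every partition `λ ∈ ℙ`. -/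
def leF (F G : Lam → Trop) : Prop :=
  ∀ l : Ptn, l.1 ≠ 0 → untrop (G (mP l)) ≤ untrop (F (mP l))

/-- Witt multiplication: `(f ⊗ g)(φ) = min` of `f(m_μ) + g(m_μ')` over the pairs `(μ, μ')`
occurring in `Δ^×(φ)`. -/
def wmulF (eqt : ℕ ≃ ℕ × ℕ) (F G : Lam → Trop) : Lam → Trop := fun φ =>
  trop (sInf {x : ℝ≥0∞ | ∃ e, cf (Dmul eqt (φ : MvPowerSeries ℕ ℕ)) e ≠ 0 ∧
    x = untrop (F (mP ⟨parts (rowM e), zero_not_mem_parts _⟩)) +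
        untrop (G (mP ⟨parts (colM e), zero_not_mem_parts _⟩))})

/-- Witt addition: `(f ⊕ g)(φ) = min` of `f(m_μ) + g(m_μ')` over the pairs `(μ, μ')`
occurring in `Δ^+(φ)`. -/
def waddF (eqp : ℕ ≃ ℕ ⊕ ℕ) (F G : Lam → Trop) : Lam → Trop := fun φ =>
  trop (sInf {x : ℝ≥0∞ | ∃ e, cf (Dadd eqp (φ : MvPowerSeries ℕ ℕ)) e ≠ 0 ∧
    x = untrop (F (mP ⟨parts (lM e), zero_not_mem_parts _⟩)) +
        untrop (G (mP ⟨parts (rM e), zero_not_mem_parts _⟩))})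

/-- Specification of the multiplicative unit `0̄` of `𝕎(𝕃)`:
`0̄(m_(n)) = 0` for one-part partitions and `0̄(m_λ) = ∞` otherwise. -/
def zbar (z : WL) : Prop :=
  ∀ l : Ptn, z (mP l) = if l.1.card ≤ 1 then trop (0 : ℝ≥0∞) else trop (⊤ : ℝ≥0∞)


lemma parts_single (a : ℕ) {n : ℕ} (hn : n ≠ 0) : parts (Finsupp.single a n) = {n} := by
  unfold parts
  rw [Finsupp.support_single_ne_zero a hn]
  simp

lemma cf_mfun (l : Multiset ℕ) (d : ℕ →₀ ℕ) :
    cf (mfun l) d = if parts d = l then 1 else 0 := rfl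

/-- For any `𝕎(𝕃)`-category `(X, d)` (i.e. `0̄ ≤ d(x,x)` and
`d(x,y) ⊗ d(y,z) ≤ d(x,z)` in the monoidal poset `𝕎(𝕃)`) and any `n ∈ ℕ_{>0}`,
setting `d_(n)(x,y) = d(x,y)(m_(n))`, the pair `(X, d_(n))` is an `𝕃`-category:
`d_(n)(x,x) = 0` and `d_(n)(x,z) ≤ d_(n)(x,y) + d_(n)(y,z)`. -/
theorem component_L_category (eqt : ℕ ≃ ℕ × ℕ) (X : Type) (d : X → X → WL)
    (hid : ∃ z : WL, zbar z ∧ ∀ x : X, leF ⇑z ⇑(d x x))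
    (hcomp : ∀ x y w : X, leF (wmulF eqt ⇑(d x y) ⇑(d y w)) ⇑(d x w)) :
    ∀ (n : ℕ) (hn : 0 < n),
      (∀ x : X, d x x (mP (pnat n hn)) = trop (0 : ℝ≥0∞)) ∧
      (∀ x y w : X, untrop (d x w (mP (pnat n hn))) ≤
        untrop (d x y (mP (pnat n hn))) + untrop (d y w (mP (pnat n hn)))) := by
  intro n hn
  constructor
  · intro x
    obtain ⟨z, hz, hle⟩ := hid
    have h := hle x (pnat n hn) (by simp [pnat])
    rw [hz (pnat n hn)] at h
    simp only [pnat, Multiset.card_singleton, le_refl, if_true, untrop_trop] at h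
    have h0 : untrop (d x x (mP (pnat n hn))) = 0 := le_antisymm h zero_le
    have := congrArg trop h0
    rwa [trop_untrop] at this
  · intro x y w
    have h := hcomp x y w (pnat n hn) (by simp [pnat])
    refine h.trans ?_
    unfold wmulF
    rw [untrop_trop]
    set e : (ℕ × ℕ) →₀ ℕ := Finsupp.single (0, 0) n with he
    have hrow : parts (rowM e) = {n} := by
      rw [he]; unfold rowM; rw [Finsupp.mapDomain_single]; exact parts_single _ hn.ne'
    have hcol : parts (colM e) = {n} := by
      rw [he]; unfold colM; rw [Finsupp.mapDomain_single]; exact parts_single _ hn.ne'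
    apply sInf_le
    refine ⟨e, ?_, ?_⟩
    · have hd : cf (Dmul eqt (↑(mP (pnat n hn)))) e =
          cf (mfun (pnat n hn).1) (Finsupp.equivMapDomain eqt.symm e) := rfl
      rw [hd, he, Finsupp.equivMapDomain_single, cf_mfun, parts_single _ hn.ne']
      simp [pnat]
    · have h1 : (⟨parts (rowM e), zero_not_mem_parts _⟩ : Ptn) = pnat n hn :=
        Subtype.ext hrow
      have h2 : (⟨parts (colM e), zero_not_mem_parts _⟩ : Ptn) = pnat n hn :=
        Subtype.ext hcol
      rw [h1, h2]

end
end

section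
/- Let $(X,d)$ be a $\mathbb{W}(\mathbb{L})$-category. For every partition $\lambda$, the function $d_\lambda(x,y) := d(x,y)(m_\lambda)$ satisfies the triangle inequality: $d_\lambda(x,z) \leq d_\lambda(x,y) + d_\lambda(y,z)$ for all $x,y,z \in X$. -/
open scoped Classical ENNReal
open Tropical

noncomputable section

def pparts {α : Type*} (v : α →₀ ℕ) : Multiset ℕ := v.support.val.map v

lemma pparts_embDomain {α β : Type*} (f : α ↪ β) (v : α →₀ ℕ) :
    pparts (Finsupp.embDomain f v) = pparts v := by
  unfold pparts
  rw [Finsupp.support_embDomain, Finset.map_val, Multiset.map_map]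
  exact Multiset.map_congr rfl fun a _ => Finsupp.embDomain_apply_self f v a

lemma pparts_mapDomain {α β : Type*} (g : α → β) (hg : Function.Injective g) (v : α →₀ ℕ) :
    pparts (Finsupp.mapDomain g v) = pparts v := by
  have h := Finsupp.embDomain_eq_mapDomain (⟨g, hg⟩ : α ↪ β) v
  rw [Function.Embedding.coeFn_mk] at h
  rw [← h]
  exact pparts_embDomain _ _

/-- For any `𝕎(𝕃)`-category `(X, d)` and every partition `λ`, the function
`d_λ(x,y) := d(x,y)(m_λ)` satisfies the triangle inequality:
`d_λ(x,z) ≤ d_λ(x,y) + d_λ(y,z)` for all `x, y, z ∈ X`. -/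
theorem component_triangle (eqt : ℕ ≃ ℕ × ℕ) (X : Type) (d : X → X → WL)
    (hid : ∃ z : WL, zbar z ∧ ∀ x : X, leF ⇑z ⇑(d x x))
    (hcomp : ∀ x y w : X, leF (wmulF eqt ⇑(d x y) ⇑(d y w)) ⇑(d x w)) :
    ∀ (l : Ptn), l.1 ≠ 0 → ∀ x y w : X,
      untrop (d x w (mP l)) ≤ untrop (d x y (mP l)) + untrop (d y w (mP l)) := by
  intro l hl x y w
  set L : List ℕ := l.1.toList with hL
  set d0 : Fin L.length →₀ ℕ := Finsupp.equivFunOnFinite.symm L.get with hd0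
  have hd0fun : ⇑d0 = L.get := rfl
  have hsupp : d0.support = Finset.univ := by
    ext j
    simp only [Finsupp.mem_support_iff, Finset.mem_univ, iff_true]
    rw [show d0 j = L.get j from rfl]
    intro h0
    apply l.2
    rw [← Multiset.mem_toList, ← hL, ← h0]
    exact List.get_mem L _
  have hpp0 : pparts d0 = l.1 := by
    unfold pparts
    rw [hsupp, Fin.univ_val_map, hd0fun, List.ofFn_get, hL, Multiset.coe_toList]
  have hdiag : Function.Injective (fun j : Fin L.length => ((j : ℕ), (j : ℕ))) := by
    intro a b h
    exact Fin.val_injective (congrArg Prod.fst h)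
  set e : (ℕ × ℕ) →₀ ℕ :=
    Finsupp.mapDomain (fun j : Fin L.length => ((j : ℕ), (j : ℕ))) d0 with he
  have hrow : parts (rowM e) = l.1 := by
    show pparts (Finsupp.mapDomain Prod.fst e) = l.1
    rw [he, ← Finsupp.mapDomain_comp]
    exact (pparts_mapDomain _ (fun a b h => Fin.val_injective h) d0).trans hpp0
  have hcol : parts (colM e) = l.1 := by
    show pparts (Finsupp.mapDomain Prod.snd e) = l.1
    rw [he, ← Finsupp.mapDomain_comp]
    exact (pparts_mapDomain _ (fun a b h => Fin.val_injective h) d0).trans hpp0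
  have hne : cf (Dmul eqt ((mP l : Lam) : MvPowerSeries ℕ ℕ)) e ≠ 0 := by
    show (MvPowerSeries.coeff (R := ℕ) e) (Dmul eqt (mfun l.1)) ≠ 0
    rw [MvPowerSeries.coeff_apply]
    show cf (mfun l.1) (Finsupp.equivMapDomain eqt.symm e) ≠ 0
    have hparts : parts (Finsupp.equivMapDomain eqt.symm e) = l.1 := by
      show pparts (Finsupp.equivMapDomain eqt.symm e) = l.1
      rw [Finsupp.equivMapDomain_eq_mapDomain, he, ← Finsupp.mapDomain_comp]
      exact (pparts_mapDomain _ (eqt.symm.injective.comp hdiag) d0).trans hpp0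
    show (MvPowerSeries.coeff (R := ℕ) (Finsupp.equivMapDomain eqt.symm e)) (mfun l.1) ≠ 0
    rw [MvPowerSeries.coeff_apply]
    show (if parts (Finsupp.equivMapDomain eqt.symm e) = l.1 then (1 : ℕ) else 0) ≠ 0
    rw [hparts, if_pos rfl]
    exact one_ne_zero
  have hPr : (⟨parts (rowM e), zero_not_mem_parts _⟩ : Ptn) = l := Subtype.ext hrow
  have hPc : (⟨parts (colM e), zero_not_mem_parts _⟩ : Ptn) = l := Subtype.ext hcol
  refine (hcomp x y w l hl).trans ?_
  show untrop (trop (sInf _)) ≤ _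
  rw [untrop_trop]
  refine sInf_le ⟨e, hne, ?_⟩
  rw [hPr, hPc]

end
end
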